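/- Let G be a connected graph on [n] and P a semiequitable partition of [n] for G (i.e., each induced bipartite graph G[Pᵢ,Pⱼ], i < j, is semiregular). Then μ₁(G) = μ₁(A(G)|P×P) if and only if P is equitable for G, i.e., each G[Pᵢ] is additionally regular. -/

import Mathlib

def partSet {n k : ℕ} (P : Fin n → Fin k) (i : Fin k) : Finset (Fin n) :=
  Finset.univ.filter (fun v => P v = i)

noncomputable def quotMat {m n k l : ℕ} (A : Matrix (Fin m) (Fin n) ℝ)
    (P : Fin m → Fin k) (Q : Fin n → Fin l) : Matrix (Fin k) (Fin l) ℝ :=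
  fun p q => (1 / Real.sqrt (((partSet P p).card : ℝ) * ((partSet Q q).card : ℝ))) *
    ∑ i ∈ partSet P p, ∑ j ∈ partSet Q q, A i j

def degIn {n : ℕ} (G : SimpleGraph (Fin n)) [DecidableRel G.Adj]
    (X : Finset (Fin n)) (v : Fin n) : ℕ :=
  (X.filter (fun u => G.Adj v u)).card

open Matrix

section RayleighHelpers

lemma psd_sub {m : ℕ} (M : Matrix (Fin m) (Fin m) ℝ) (hM : M.IsHermitian) :
    (((⨆ i, hM.eigenvalues i) • (1 : Matrix (Fin m) (Fin m) ℝ)) - M).PosSemidef := by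
  set μ := ⨆ i, hM.eigenvalues i with hμ
  have hle : ∀ i, hM.eigenvalues i ≤ μ :=
    fun i => le_ciSup (Set.Finite.bddAbove (Set.finite_range _)) i
  have hU : (hM.eigenvectorUnitary : Matrix (Fin m) (Fin m) ℝ) *
      star (hM.eigenvectorUnitary : Matrix (Fin m) (Fin m) ℝ) = 1 :=
    (Matrix.mem_unitaryGroup_iff).mp hM.eigenvectorUnitary.2
  have hN : μ • (1 : Matrix (Fin m) (Fin m) ℝ) - M =
      (hM.eigenvectorUnitary : Matrix (Fin m) (Fin m) ℝ) *
        Matrix.diagonal (fun i => μ - hM.eigenvalues i) *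
        star (hM.eigenvectorUnitary : Matrix (Fin m) (Fin m) ℝ) := by
    have hD : Matrix.diagonal (fun i : Fin m => μ - hM.eigenvalues i) =
        μ • (1 : Matrix (Fin m) (Fin m) ℝ) - Matrix.diagonal (RCLike.ofReal ∘ hM.eigenvalues) := by
      ext i j
      rcases eq_or_ne i j with h | h <;>
        simp [Matrix.diagonal_apply, h, Matrix.one_apply]
    rw [hD, Matrix.mul_sub, Matrix.sub_mul, Matrix.mul_smul, Matrix.smul_mul, mul_one, hU]
    rw [← Unitary.conjStarAlgAut_apply (S := ℝ), ← hM.spectral_theorem]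
  rw [hN]
  exact (Matrix.posSemidef_diagonal_iff.mpr
    fun i => sub_nonneg.2 (hle i)).mul_mul_conjTranspose_same _

lemma rayleigh_le {m : ℕ} (M : Matrix (Fin m) (Fin m) ℝ) (hM : M.IsHermitian) (x : Fin m → ℝ) :
    x ⬝ᵥ M *ᵥ x ≤ (⨆ i, hM.eigenvalues i) * (x ⬝ᵥ x) := by
  have h := (psd_sub M hM).dotProduct_mulVec_nonneg x
  simp only [Matrix.sub_mulVec, Matrix.smul_mulVec, Matrix.one_mulVec, dotProduct_sub,
    dotProduct_smul, smul_eq_mul, RCLike.star_def, star_trivial, RCLike.re_to_real] at h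
  linarith

lemma rayleigh_eq_eigen {m : ℕ} (M : Matrix (Fin m) (Fin m) ℝ) (hM : M.IsHermitian)
    (x : Fin m → ℝ) (hx : x ⬝ᵥ M *ᵥ x = (⨆ i, hM.eigenvalues i) * (x ⬝ᵥ x)) :
    M *ᵥ x = (⨆ i, hM.eigenvalues i) • x := by
  have h := ((psd_sub M hM).dotProduct_mulVec_zero_iff x).mp ?_
  · have := congrFun h
    funext j
    have hj := this j
    simp only [Matrix.sub_mulVec, Matrix.smul_mulVec, Matrix.one_mulVec, Pi.sub_apply,
      Pi.zero_apply, sub_eq_zero] at hj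
    simpa using hj.symm
  · simp only [star_trivial, Matrix.sub_mulVec, Matrix.smul_mulVec, Matrix.one_mulVec,
      dotProduct_sub, dotProduct_smul, smul_eq_mul]
    rw [hx]; ring

lemma exists_top_eigenvector {m : ℕ} (hm : 0 < m) (M : Matrix (Fin m) (Fin m) ℝ)
    (hM : M.IsHermitian) :
    ∃ v : Fin m → ℝ, v ≠ 0 ∧ M *ᵥ v = (⨆ i, hM.eigenvalues i) • v := by
  have : Nonempty (Fin m) := ⟨⟨0, hm⟩⟩
  obtain ⟨i, hi⟩ := Finite.exists_max hM.eigenvalues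
  have hμ : (⨆ j, hM.eigenvalues j) = hM.eigenvalues i :=
    le_antisymm (ciSup_le hi) (le_ciSup (Set.Finite.bddAbove (Set.finite_range _)) i)
  refine ⟨⇑(hM.eigenvectorBasis i), ?_, by rw [hμ]; exact hM.mulVec_eigenvectorBasis i⟩
  intro h
  exact hM.eigenvectorBasis.orthonormal.ne_zero i (by ext j; exact congrFun h j)

lemma dot_self_pos {m : ℕ} {x : Fin m → ℝ} (hx : x ≠ 0) : 0 < x ⬝ᵥ x := by
  obtain ⟨i, hi⟩ := Function.ne_iff.mp hx
  exact Finset.sum_pos' (fun j _ => mul_self_nonneg _)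
    ⟨i, Finset.mem_univ i, mul_self_pos.mpr hi⟩

end RayleighHelpers

section SMatrix

noncomputable def normChar {n k : ℕ} (P : Fin n → Fin k) : Matrix (Fin n) (Fin k) ℝ :=
  fun i p => if P i = p then (Real.sqrt ((partSet P p).card : ℝ))⁻¹ else 0

lemma partSet_card_pos {n k : ℕ} {P : Fin n → Fin k} (hsurj : Function.Surjective P) (p : Fin k) :
    0 < (partSet P p).card := by
  obtain ⟨i, hi⟩ := hsurj p
  exact Finset.card_pos.mpr ⟨i, by simp [partSet, hi]⟩

lemma mem_partSet {n k : ℕ} {P : Fin n → Fin k} {i : Fin n} {p : Fin k} :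
    i ∈ partSet P p ↔ P i = p := by simp [partSet]

lemma normChar_tt {n k : ℕ} {P : Fin n → Fin k} (hsurj : Function.Surjective P) :
    (normChar P)ᵀ * normChar P = 1 := by
  ext p q
  simp only [Matrix.mul_apply, Matrix.transpose_apply, normChar]
  rcases eq_or_ne p q with rfl | hpq
  · have hc : (0 : ℝ) < ((partSet P p).card : ℝ) := by
      exact_mod_cast partSet_card_pos hsurj p
    rw [Matrix.one_apply_eq]
    have : ∀ i : Fin n, (if P i = p then (Real.sqrt ((partSet P p).card : ℝ))⁻¹ else 0) *
        (if P i = p then (Real.sqrt ((partSet P p).card : ℝ))⁻¹ else 0) =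
        if P i = p then (((partSet P p).card : ℝ))⁻¹ else 0 := by
      intro i
      split
      · rw [← mul_inv, Real.mul_self_sqrt hc.le]
      · ring
    rw [Finset.sum_congr rfl (fun i _ => this i), ← Finset.sum_filter]
    rw [Finset.sum_const, nsmul_eq_mul]
    show ((partSet P p).card : ℝ) * _ = 1
    field_simp
  · rw [Matrix.one_apply_ne hpq]
    apply Finset.sum_eq_zero
    intro i _
    rcases eq_or_ne (P i) p with h | h
    · rw [if_neg (show ¬ P i = q from by rw [h]; exact hpq)]; ring
    · rw [if_neg h]; ring

lemma quotMat_eq {n k : ℕ} (A : Matrix (Fin n) (Fin n) ℝ) (P : Fin n → Fin k) :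
    quotMat A P P = (normChar P)ᵀ * A * normChar P := by
  ext p q
  set sp := (Real.sqrt ((partSet P p).card : ℝ))⁻¹ with hsp
  set sq := (Real.sqrt ((partSet P q).card : ℝ))⁻¹ with hsq
  have hrhs : ((normChar P)ᵀ * A * normChar P) p q
      = ∑ j, (∑ i, (if P i = p then sp else 0) * A i j) * (if P j = q then sq else 0) := by
    simp [Matrix.mul_apply, normChar, hsp, hsq]
  rw [hrhs, quotMat]
  refine Eq.symm ?_
  have h2 : ∀ j : Fin n, (∑ i, (if P i = p then sp else 0) * A i j)
      = ∑ i ∈ partSet P p, sp * A i j := by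
    intro j
    rw [partSet, Finset.sum_filter]
    exact Finset.sum_congr rfl fun i _ => by split <;> ring
  calc ∑ j, (∑ i, (if P i = p then sp else 0) * A i j) * (if P j = q then sq else 0)
      = ∑ j, if P j = q then (∑ i ∈ partSet P p, sp * A i j) * sq else 0 := by
        refine Finset.sum_congr rfl fun j _ => ?_
        rw [h2 j]; split <;> ring
    _ = ∑ j ∈ partSet P q, (∑ i ∈ partSet P p, sp * A i j) * sq :=
        (Finset.sum_filter _ _).symm
    _ = ∑ j ∈ partSet P q, ∑ i ∈ partSet P p, sp * A i j * sq := by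
        refine Finset.sum_congr rfl fun j _ => ?_
        rw [Finset.sum_mul]
    _ = ∑ i ∈ partSet P p, ∑ j ∈ partSet P q, sp * A i j * sq := Finset.sum_comm
    _ = (sp * sq) * ∑ i ∈ partSet P p, ∑ j ∈ partSet P q, A i j := by
        rw [Finset.mul_sum]
        refine Finset.sum_congr rfl fun i _ => ?_
        rw [Finset.mul_sum]
        exact Finset.sum_congr rfl fun j _ => by ring
    _ = (1 / Real.sqrt (((partSet P p).card : ℝ) * ((partSet P q).card : ℝ))) *
        ∑ i ∈ partSet P p, ∑ j ∈ partSet P q, A i j := by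
        rw [Real.sqrt_mul (by positivity), one_div, mul_inv, hsp, hsq]

end SMatrix

section Main

variable {n k : ℕ}

-- sum of adjacency entries over a finset equals degIn
lemma degIn_sum {n : ℕ} (G : SimpleGraph (Fin n)) [DecidableRel G.Adj]
    (u : Fin n) (X : Finset (Fin n)) :
    (∑ j ∈ X, G.adjMatrix ℝ u j) = (degIn G X u : ℝ) := by
  simp [SimpleGraph.adjMatrix_apply, degIn, Finset.sum_boole]

-- |eigenvector| is again a top eigenvector, for the adjacency matrix
lemma normChar_mulVec {n k : ℕ} (P : Fin n → Fin k) (y : Fin k → ℝ) (j : Fin n) :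
    (normChar P *ᵥ y) j = (Real.sqrt ((partSet P (P j)).card : ℝ))⁻¹ * y (P j) := by
  simp only [Matrix.mulVec, dotProduct, normChar, ite_mul, zero_mul]
  rw [Finset.sum_ite_eq]
  simp

lemma normChar_mul_apply {n k : ℕ} (P : Fin n → Fin k) (B' : Matrix (Fin k) (Fin k) ℝ)
    (i : Fin n) (q : Fin k) :
    (normChar P * B') i q = (Real.sqrt ((partSet P (P i)).card : ℝ))⁻¹ * B' (P i) q := by
  simp only [Matrix.mul_apply, normChar, ite_mul, zero_mul]
  rw [Finset.sum_ite_eq]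
  simp

lemma mul_normChar_apply {n k : ℕ} (P : Fin n → Fin k) (A' : Matrix (Fin n) (Fin n) ℝ)
    (i : Fin n) (q : Fin k) :
    (A' * normChar P) i q
      = (∑ j ∈ partSet P q, A' i j) * (Real.sqrt ((partSet P q).card : ℝ))⁻¹ := by
  simp only [Matrix.mul_apply, normChar, mul_ite, mul_zero]
  rw [← Finset.sum_filter]
  rw [Finset.sum_mul]
  rfl

lemma normChar_nonneg {n k : ℕ} (P : Fin n → Fin k) (i : Fin n) (p : Fin k) :
    0 ≤ normChar P i p := by
  simp only [normChar]
  split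
  · positivity
  · exact le_refl _

lemma normChar_apply_self {n k : ℕ} (P : Fin n → Fin k) (i : Fin n) :
    normChar P i (P i) = (Real.sqrt ((partSet P (P i)).card : ℝ))⁻¹ := by
  simp [normChar]

-- |eigenvector| is again a top eigenvector, for the adjacency matrix
lemma abs_top_eigen {n : ℕ} (G : SimpleGraph (Fin n)) [DecidableRel G.Adj]
    (hA : (G.adjMatrix ℝ).IsHermitian) (v : Fin n → ℝ)
    (hv : (G.adjMatrix ℝ) *ᵥ v = (⨆ i, hA.eigenvalues i) • v) :
    (G.adjMatrix ℝ) *ᵥ (fun i => |v i|) = (⨆ i, hA.eigenvalues i) • (fun i => |v i|) := by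
  have hww : (fun i => |v i|) ⬝ᵥ (fun i => |v i|) = v ⬝ᵥ v := by
    simp [dotProduct, abs_mul_abs_self]
  have h1 : v ⬝ᵥ ((G.adjMatrix ℝ) *ᵥ v) = (⨆ i, hA.eigenvalues i) * (v ⬝ᵥ v) := by
    rw [hv]; simp [dotProduct_smul]
  have h2 : v ⬝ᵥ ((G.adjMatrix ℝ) *ᵥ v)
      ≤ (fun i => |v i|) ⬝ᵥ ((G.adjMatrix ℝ) *ᵥ fun i => |v i|) := by
    simp only [dotProduct, mulVec, Finset.mul_sum]
    refine Finset.sum_le_sum fun i _ => Finset.sum_le_sum fun j _ => ?_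
    have h0 : (0 : ℝ) ≤ G.adjMatrix ℝ i j := by
      simp only [SimpleGraph.adjMatrix_apply]; split <;> norm_num
    have habs : v i * v j ≤ |v i| * |v j| := by
      rw [← abs_mul]; exact le_abs_self _
    calc v i * (G.adjMatrix ℝ i j * v j) = G.adjMatrix ℝ i j * (v i * v j) := by ring
      _ ≤ G.adjMatrix ℝ i j * (|v i| * |v j|) := mul_le_mul_of_nonneg_left habs h0
      _ = |v i| * (G.adjMatrix ℝ i j * |v j|) := by ring
  have h3 := rayleigh_le _ hA (fun i => |v i|)
  refine rayleigh_eq_eigen _ hA (fun i => |v i|) (le_antisymm h3 ?_)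
  rw [hww, ← h1]
  exact h2

set_option maxHeartbeats 1000000 in
/-- for a connected graph `G` and a semiequitable partition `P`
(each `G[P i, P j]`, `i ≠ j`, is semiregular), `μ₁(G) = μ₁(A(G)|P×P)` if and only
if `P` is equitable, i.e. each `G[P i]` is regular. -/
theorem stmt16 {n k : ℕ} (hn : 0 < n) (hk : 0 < k)
    (G : SimpleGraph (Fin n)) [DecidableRel G.Adj] (hconn : G.Connected)
    (hA : (G.adjMatrix ℝ).IsHermitian)
    (P : Fin n → Fin k) (hsurj : Function.Surjective P)
    (hsemi : ∀ i j : Fin k, i ≠ j → ∀ u ∈ partSet P i, ∀ v ∈ partSet P i,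
      degIn G (partSet P j) u = degIn G (partSet P j) v)
    (hB : (quotMat (G.adjMatrix ℝ) P P).IsHermitian) :
    (⨆ i : Fin n, hA.eigenvalues i) = (⨆ p : Fin k, hB.eigenvalues p) ↔
      ∀ i : Fin k, ∀ u ∈ partSet P i, ∀ v ∈ partSet P i,
        degIn G (partSet P i) u = degIn G (partSet P i) v := by
  classical
  set A := G.adjMatrix ℝ with hAdef
  set S := normChar P with hSdef
  set B := quotMat A P P with hBdef
  set μA := ⨆ i, hA.eigenvalues i with hμA
  set μB := ⨆ p, hB.eigenvalues p with hμB
  have hBS : B = Sᵀ * A * S := quotMat_eq A P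
  have hStS : Sᵀ * S = 1 := normChar_tt hsurj
  have hcard : ∀ p : Fin k, (0:ℝ) < ((partSet P p).card : ℝ) := by
    intro p; exact_mod_cast partSet_card_pos hsurj p
  have hsqrt : ∀ p : Fin k, (0:ℝ) < Real.sqrt ((partSet P p).card : ℝ) :=
    fun p => Real.sqrt_pos.mpr (hcard p)
  -- transport of dot products through S
  have key_norm : ∀ x : Fin k → ℝ, (S *ᵥ x) ⬝ᵥ (S *ᵥ x) = x ⬝ᵥ x := by
    intro x
    have hvS : (S *ᵥ x) ᵥ* S = x := by
      rw [← vecMul_transpose, vecMul_vecMul, hStS, vecMul_one]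
    rw [dotProduct_mulVec, hvS]
  have key_quad : ∀ x : Fin k → ℝ, (S *ᵥ x) ⬝ᵥ (A *ᵥ (S *ᵥ x)) = x ⬝ᵥ (B *ᵥ x) := by
    intro x
    rw [hBS, ← Matrix.mulVec_mulVec, ← Matrix.mulVec_mulVec,
      dotProduct_mulVec x, vecMul_transpose]
  -- μB ≤ μA always
  have hBAle : μB ≤ μA := by
    obtain ⟨y, hy0, hyB⟩ := exists_top_eigenvector hk B hB
    have hyy : 0 < y ⬝ᵥ y := dot_self_pos hy0
    have h1 := rayleigh_le A hA (S *ᵥ y)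
    rw [key_quad, key_norm, hyB] at h1
    simp only [dotProduct_smul, smul_eq_mul] at h1
    exact le_of_mul_le_mul_right (by linarith) hyy
  constructor
  · -- equality → equitable
    intro heq
    obtain ⟨y, hy0, hyB⟩ := exists_top_eigenvector hk B hB
    set z := S *ᵥ y with hz
    have hzz : z ⬝ᵥ z = y ⬝ᵥ y := key_norm y
    have hzAz : z ⬝ᵥ (A *ᵥ z) = μA * (z ⬝ᵥ z) := by
      rw [key_quad, hyB, hzz]
      simp only [dotProduct_smul, smul_eq_mul]
      rw [heq]
    have hzA : A *ᵥ z = μA • z := rayleigh_eq_eigen A hA z hzAz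
    set w : Fin n → ℝ := fun i => |z i| with hw
    have hwA : A *ᵥ w = μA • w := abs_top_eigen G hA z hzA
    have hz0 : z ≠ 0 := by
      intro h
      have h2 : (0:ℝ) < y ⬝ᵥ y := dot_self_pos hy0
      rw [← hzz, h] at h2
      simp at h2
    -- positivity of w everywhere
    have hw0 : ∃ i, w i ≠ 0 := by
      obtain ⟨i, hi⟩ := Function.ne_iff.mp hz0
      exact ⟨i, fun hzero => hi (by simpa [hw, abs_eq_zero] using hzero)⟩
    have hkey : ∀ a b : Fin n, G.Adj a b → w a = 0 → w b = 0 := by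
      intro a b hab ha
      have h := congrFun hwA a
      simp only [Pi.smul_apply, smul_eq_mul, ha, mul_zero] at h
      have h' : ∑ j, A a j * w j = 0 := by
        simpa [mulVec, dotProduct] using h
      have hnn : ∀ j ∈ Finset.univ, (0:ℝ) ≤ A a j * w j := by
        intro j _
        have h0 : (0 : ℝ) ≤ A a j := by
          simp only [hAdef, SimpleGraph.adjMatrix_apply]; split <;> norm_num
        exact mul_nonneg h0 (abs_nonneg _)
      have := (Finset.sum_eq_zero_iff_of_nonneg hnn).mp h' b (Finset.mem_univ b)
      have hab1 : A a b = 1 := by simp [hAdef, SimpleGraph.adjMatrix_apply, hab]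
      rwa [hab1, one_mul] at this
    have hwpos : ∀ i, 0 < w i := by
      obtain ⟨i0, hi0⟩ := hw0
      have hwalk : ∀ (a b : Fin n), G.Walk a b → w a ≠ 0 → w b ≠ 0 := by
        intro a b p
        induction p with
        | nil => exact id
        | cons h q ih =>
          intro ha
          exact ih fun hc => ha (hkey _ _ h.symm hc)
      intro i
      have hne := hwalk i0 i (hconn.preconnected i0 i).some hi0
      exact lt_of_le_of_ne (abs_nonneg _) (Ne.symm hne)
    -- w is constant on parts
    set c : Fin k → ℝ := fun p => (Real.sqrt ((partSet P p).card : ℝ))⁻¹ * |y p| with hc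
    have hwc : ∀ j, w j = c (P j) := by
      intro j
      have hzj : z j = (Real.sqrt ((partSet P (P j)).card : ℝ))⁻¹ * y (P j) := by
        rw [hz, hSdef]
        exact normChar_mulVec P y j
      simp only [hw, hzj, abs_mul, hc]
      congr 1
      exact abs_of_nonneg (by positivity)
    have hcpos : ∀ p, 0 < c p := by
      intro p
      obtain ⟨j, hj⟩ := hsurj p
      have := hwpos j
      rwa [hwc j, hj] at this
    -- the eigenvalue equation in terms of degIn
    have heig : ∀ u : Fin n, (∑ q : Fin k, (degIn G (partSet P q) u : ℝ) * c q)
        = μA * c (P u) := by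
      intro u
      have h := congrFun hwA u
      simp only [Pi.smul_apply, smul_eq_mul, mulVec, dotProduct] at h
      rw [← hwc u, ← h]
      have hfib := Finset.sum_fiberwise_eq_sum_filter Finset.univ Finset.univ P
        (fun j => A u j * w j)
      simp only [Finset.mem_univ, Finset.filter_true] at hfib
      rw [← hfib]
      refine Finset.sum_congr rfl fun q _ => ?_
      have : ∑ j ∈ Finset.filter (fun j => P j = q) Finset.univ, A u j * w j
          = ∑ j ∈ partSet P q, A u j * c q := by
        refine Finset.sum_congr rfl fun j hj => ?_
        rw [hwc j, mem_partSet.mp hj]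
      rw [this, ← Finset.sum_mul, degIn_sum]
    intro p u hu v hv
    have hu' : P u = p := mem_partSet.mp hu
    have hv' : P v = p := mem_partSet.mp hv
    have he : (∑ q : Fin k, (degIn G (partSet P q) u : ℝ) * c q)
        = ∑ q : Fin k, (degIn G (partSet P q) v : ℝ) * c q := by
      rw [heig u, heig v, hu', hv']
    rw [← Finset.add_sum_erase Finset.univ _ (Finset.mem_univ p),
      ← Finset.add_sum_erase Finset.univ _ (Finset.mem_univ p)] at he
    have herase : ∑ q ∈ Finset.univ.erase p, (degIn G (partSet P q) u : ℝ) * c q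
        = ∑ q ∈ Finset.univ.erase p, (degIn G (partSet P q) v : ℝ) * c q := by
      refine Finset.sum_congr rfl fun q hq => ?_
      have hqp : p ≠ q := fun h => (Finset.mem_erase.mp hq).1 h.symm
      rw [hsemi p q hqp u hu v hv]
    rw [herase] at he
    have := add_right_cancel he
    have := mul_right_cancel₀ (hcpos p).ne' this
    exact_mod_cast this
  · -- equitable → equality
    intro hreg
    have hconst : ∀ p q : Fin k, ∀ u ∈ partSet P p, ∀ v ∈ partSet P p,
        degIn G (partSet P q) u = degIn G (partSet P q) v := by
      intro p q u hu v hv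
      rcases eq_or_ne p q with rfl | h
      · exact hreg p u hu v hv
      · exact hsemi p q h u hu v hv
    -- A * S = S * B
    have hE : A * S = S * B := by
      ext i q
      have hlhs : (A * S) i q
          = (degIn G (partSet P q) i : ℝ) * (Real.sqrt ((partSet P q).card : ℝ))⁻¹ := by
        rw [hSdef, mul_normChar_apply, hAdef, degIn_sum]
      have hrhs : (S * B) i q = (Real.sqrt ((partSet P (P i)).card : ℝ))⁻¹ * B (P i) q := by
        rw [hSdef]
        exact normChar_mul_apply P B i q
      have hBval : B (P i) q =
          (1 / Real.sqrt (((partSet P (P i)).card : ℝ) * ((partSet P q).card : ℝ))) *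
          (((partSet P (P i)).card : ℝ) * (degIn G (partSet P q) i : ℝ)) := by
        rw [hBdef]
        show (1 / Real.sqrt _) * (∑ u ∈ partSet P (P i), ∑ j ∈ partSet P q, A u j) = _
        congr 1
        have hmem : i ∈ partSet P (P i) := mem_partSet.mpr rfl
        have : ∀ u ∈ partSet P (P i), (∑ j ∈ partSet P q, A u j)
            = (degIn G (partSet P q) i : ℝ) := by
          intro u hu
          rw [degIn_sum]
          exact_mod_cast hconst (P i) q u hu i hmem
        rw [Finset.sum_congr rfl this, Finset.sum_const, nsmul_eq_mul]
      rw [hlhs, hrhs, hBval]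
      set a := Real.sqrt ((partSet P (P i)).card : ℝ) with ha
      set b := Real.sqrt ((partSet P q).card : ℝ) with hb
      have ha0 : 0 < a := hsqrt (P i)
      have hb0 : 0 < b := hsqrt q
      have hca : ((partSet P (P i)).card : ℝ) = a * a :=
        (Real.mul_self_sqrt (hcard (P i)).le).symm
      rw [Real.sqrt_mul (hcard (P i)).le, ← ha, ← hb, hca]
      field_simp
    have hSA : Sᵀ * A = B * Sᵀ := by
      have hT := congrArg Matrix.transpose hE
      rw [Matrix.transpose_mul, Matrix.transpose_mul] at hT
      have hAT : Aᵀ = A := SimpleGraph.transpose_adjMatrix G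
      have hBT : Bᵀ = B := by
        rw [← Matrix.conjTranspose_eq_transpose_of_trivial]
        exact hB
      rwa [hAT, hBT] at hT
    -- lift the nonnegative top eigenvector of A
    obtain ⟨v, hv0, hvA⟩ := exists_top_eigenvector hn A hA
    set w : Fin n → ℝ := fun i => |v i| with hw
    have hwA : A *ᵥ w = μA • w := abs_top_eigen G hA v hvA
    set x := Sᵀ *ᵥ w with hx
    have hxB : B *ᵥ x = μA • x := by
      rw [hx, Matrix.mulVec_mulVec, ← hSA, ← Matrix.mulVec_mulVec, hwA, Matrix.mulVec_smul]
    obtain ⟨i, hi⟩ := Function.ne_iff.mp hv0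
    have hxpos : 0 < x (P i) := by
      rw [hx]
      simp only [mulVec, dotProduct, Matrix.transpose_apply]
      refine Finset.sum_pos' (fun j _ => ?_) ⟨i, Finset.mem_univ i, ?_⟩
      · exact mul_nonneg (hSdef ▸ normChar_nonneg P j (P i)) (abs_nonneg _)
      · rw [hSdef, normChar_apply_self]
        exact mul_pos (inv_pos.mpr (hsqrt (P i))) (abs_pos.mpr hi)
    have hxx : 0 < x ⬝ᵥ x :=
      Finset.sum_pos' (fun j _ => mul_self_nonneg _)
        ⟨P i, Finset.mem_univ _, mul_pos hxpos hxpos⟩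
    have h1 := rayleigh_le B hB x
    rw [hxB] at h1
    simp only [dotProduct_smul, smul_eq_mul] at h1
    exact le_antisymm (le_of_mul_le_mul_right h1 hxx) hBAle

end Main
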